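/- For every c ∈ ℝ and every r > 0, ∫_0^r √x·exp(c·x) / √(r − x) dx = (r/2)·exp(c·r/2)·( ∫_0^π exp((c·r/2)·cos θ) dθ + ∫_0^π exp((c·r/2)·cos θ)·cos θ dθ ). -/

import Mathlib

open MeasureTheory Real Set

theorem sqrt_exp_convolution_bessel
    (c r : ℝ) (hr : 0 < r) :
    ∫ x in Set.Ioo 0 r, Real.sqrt x * Real.exp (c * x) / Real.sqrt (r - x) =
      (r / 2) * Real.exp (c * r / 2) *
        ((∫ θ in (0:ℝ)..π, Real.exp ((c * r / 2) * Real.cos θ)) +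
          ∫ θ in (0:ℝ)..π, Real.exp ((c * r / 2) * Real.cos θ) * Real.cos θ) := by
  have hπ := Real.pi_pos
  set a := r / 2 with ha
  have ha0 : 0 < a := by positivity
  have hra : r = 2 * a := by rw [ha]; ring
  -- image of Ioo 0 π under θ ↦ a * (1 + cos θ)
  have himg : (fun θ : ℝ => a * (1 + Real.cos θ)) '' Set.Ioo 0 π = Set.Ioo 0 r := by
    ext y
    constructor
    · rintro ⟨θ, ⟨h0, hπ'⟩, rfl⟩
      have h1 : Real.cos θ < 1 := by
        have := Real.strictAntiOn_cos ⟨le_refl 0, hπ.le⟩ ⟨h0.le, hπ'.le⟩ h0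
        simpa using this
      have h2 : -1 < Real.cos θ := by
        have := Real.strictAntiOn_cos ⟨h0.le, hπ'.le⟩ ⟨hπ.le, le_refl π⟩ hπ'
        simpa using this
      refine ⟨?_, ?_⟩
      · show (0:ℝ) < a * (1 + Real.cos θ); nlinarith
      · show a * (1 + Real.cos θ) < r; nlinarith
    · rintro ⟨hy0, hyr⟩
      have h1 : y / a - 1 < 1 := by
        rw [div_sub_one ha0.ne', div_lt_one ha0]
        linarith [hra ▸ hyr]
      have h2 : (-1 : ℝ) < y / a - 1 := by
        have : (0:ℝ) < y / a := div_pos hy0 ha0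
        linarith
      refine ⟨Real.arccos (y / a - 1), ⟨?_, ?_⟩, ?_⟩
      · exact Real.arccos_pos.2 h1
      · rw [Real.arccos_eq_pi_div_two_sub_arcsin]
        have := Real.neg_pi_div_two_lt_arcsin.2 h2
        linarith
      · simp only
        rw [Real.cos_arccos h2.le h1.le]
        field_simp
        ring
  have hderiv : ∀ θ ∈ Set.Ioo (0:ℝ) π,
      HasDerivWithinAt (fun θ : ℝ => a * (1 + Real.cos θ)) (-(a * Real.sin θ))
        (Set.Ioo 0 π) θ := by
    intro θ _
    have h : HasDerivAt (fun θ : ℝ => a * (1 + Real.cos θ)) (a * (-Real.sin θ)) θ :=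
      ((Real.hasDerivAt_cos θ).const_add 1).const_mul a
    have : a * (-Real.sin θ) = -(a * Real.sin θ) := by ring
    exact (this ▸ h).hasDerivWithinAt
  have hinj : Set.InjOn (fun θ : ℝ => a * (1 + Real.cos θ)) (Set.Ioo 0 π) := by
    intro x hx y hy h
    have hcx : Real.cos x = Real.cos y := by
      field_simp at h
      linarith
    exact Real.injOn_cos ⟨hx.1.le, hx.2.le⟩ ⟨hy.1.le, hy.2.le⟩ hcx
  have key := MeasureTheory.integral_image_eq_integral_abs_deriv_smul measurableSet_Ioo
    hderiv hinj (fun x => Real.sqrt x * Real.exp (c * x) / Real.sqrt (r - x))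
  rw [himg] at key
  rw [key]
  -- rewrite the RHS interval integrals as set integrals over Ioo
  have hc1 : Continuous fun θ : ℝ => Real.exp (c * r / 2 * Real.cos θ) :=
    Real.continuous_exp.comp (continuous_const.mul Real.continuous_cos)
  have hc2 : Continuous fun θ : ℝ => Real.exp (c * r / 2 * Real.cos θ) * Real.cos θ :=
    hc1.mul Real.continuous_cos
  rw [intervalIntegral.integral_of_le hπ.le, intervalIntegral.integral_of_le hπ.le,
    MeasureTheory.integral_Ioc_eq_integral_Ioo, MeasureTheory.integral_Ioc_eq_integral_Ioo,
    ← MeasureTheory.integral_add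
      ((hc1.integrableOn_Icc (a := 0) (b := π)).mono_set Set.Ioo_subset_Icc_self)
      ((hc2.integrableOn_Icc (a := 0) (b := π)).mono_set Set.Ioo_subset_Icc_self),
    ← MeasureTheory.integral_const_mul]
  refine MeasureTheory.setIntegral_congr_fun measurableSet_Ioo (fun θ hθ => ?_)
  obtain ⟨h0, hπ'⟩ := hθ
  have hsin : 0 < Real.sin θ := Real.sin_pos_of_pos_of_lt_pi h0 hπ'
  have h1 : Real.cos θ < 1 := by
    have := Real.strictAntiOn_cos ⟨le_refl 0, hπ.le⟩ ⟨h0.le, hπ'.le⟩ h0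
    simpa using this
  have h2 : -1 < Real.cos θ := by
    have := Real.strictAntiOn_cos ⟨h0.le, hπ'.le⟩ ⟨hπ.le, le_refl π⟩ hπ'
    simpa using this
  set c0 := Real.cos θ with hc0
  have hp : (0:ℝ) < 1 + c0 := by linarith
  have hm : (0:ℝ) < 1 - c0 := by linarith
  have hsineq : Real.sin θ = Real.sqrt (1 - c0) * Real.sqrt (1 + c0) := by
    rw [← Real.sqrt_mul hm.le]
    have : (1 - c0) * (1 + c0) = Real.sin θ ^ 2 := by
      have := Real.sin_sq_add_cos_sq θ
      nlinarith
    rw [this, Real.sqrt_sq hsin.le]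
  have habs : |-(a * Real.sin θ)| = a * Real.sin θ := by
    rw [abs_neg, abs_of_nonneg (by positivity)]
  simp only [smul_eq_mul, habs]
  have hrsub : r - a * (1 + c0) = a * (1 - c0) := by rw [hra]; ring
  rw [hrsub, Real.sqrt_mul ha0.le, Real.sqrt_mul ha0.le, hsineq]
  have hsa : (0:ℝ) < Real.sqrt a := Real.sqrt_pos.2 ha0
  have hsm : (0:ℝ) < Real.sqrt (1 - c0) := Real.sqrt_pos.2 hm
  have hsp : (0:ℝ) < Real.sqrt (1 + c0) := Real.sqrt_pos.2 hp
  have hexp : Real.exp (c * (a * (1 + c0))) = Real.exp (c * r / 2) * Real.exp (c * r / 2 * c0) := by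
    rw [← Real.exp_add, hra]; ring_nf
  rw [hexp]
  have hsq : Real.sqrt (1 + c0) * Real.sqrt (1 + c0) = 1 + c0 := Real.mul_self_sqrt hp.le
  field_simp
  linear_combination hsq
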